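/- Let X be a set with a total order making it a Hall order context: let A be a λ-stable nonempty subset of the free magma Br(X) (i.e., the left factor of every non-leaf element of A lies in A), equipped with a Hall order (a total order on A such that λ(t) < t for all t ∈ A with |t| > 1). Then there exists a Hall order on all of Br(X) extending the given order on A. -/

import Mathlib

/-- The left factor of an element of the free magma (a leaf is its own left factor). -/
def FreeMagma.leftFactor {X : Type*} : FreeMagma X → FreeMagma X
  | FreeMagma.of a => FreeMagma.of a
  | FreeMagma.mul x _ => x

/-- The length (number of leaves) of an element of the free magma. -/
def FreeMagma.magmaLength {X : Type*} : FreeMagma X → ℕ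
  | FreeMagma.of _ => 1
  | FreeMagma.mul x y => x.magmaLength + y.magmaLength

namespace HallExtAux

lemma length_pos {X : Type*} : ∀ t : FreeMagma X, 1 ≤ t.magmaLength
  | FreeMagma.of _ => le_refl 1
  | FreeMagma.mul x y => by
      have hx := length_pos x
      simp only [FreeMagma.magmaLength]
      omega

lemma length_leftFactor_lt {X : Type*} {t : FreeMagma X} (h : 1 < t.magmaLength) :
    t.leftFactor.magmaLength < t.magmaLength := by
  cases t with
  | of a => simp [FreeMagma.magmaLength] at h
  | mul x y =>
      have := length_pos y
      simp only [FreeMagma.leftFactor, FreeMagma.magmaLength]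
      omega

open Classical in
/-- first iterated left factor lying in `A`, if any. -/
noncomputable def gA {X : Type*} (A : Set (FreeMagma X)) : FreeMagma X → Option (FreeMagma X)
  | FreeMagma.of a => if FreeMagma.of a ∈ A then some (FreeMagma.of a) else none
  | FreeMagma.mul x y => if FreeMagma.mul x y ∈ A then some (FreeMagma.mul x y) else gA A x

lemma gA_mem {X : Type*} {A : Set (FreeMagma X)} :
    ∀ (t a : FreeMagma X), gA A t = some a → a ∈ A
  | FreeMagma.of x, a, h => by
      by_cases hx : FreeMagma.of x ∈ A <;> simp [gA, hx] at h
      exact h ▸ hx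
  | FreeMagma.mul x y, a, h => by
      by_cases hx : x * y ∈ A <;> simp [gA, hx] at h
      · exact h ▸ hx
      · exact gA_mem x a h

lemma gA_mem_self {X : Type*} {A : Set (FreeMagma X)} {t : FreeMagma X} (h : t ∈ A) :
    gA A t = some t := by
  cases t with
  | of x => simp [gA, h]
  | mul x y => simp only [gA, FreeMagma.mul_eq] at *; simp [h]

lemma gA_not_mem {X : Type*} {A : Set (FreeMagma X)} {t : FreeMagma X} (h : t ∉ A) :
    gA A t = gA A t.leftFactor := by
  cases t with
  | of x => rfl
  | mul x y => simp only [gA, FreeMagma.leftFactor, FreeMagma.mul_eq] at *; simp [h]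

/-- tie-breaking order: length, then a well-ordering. -/
def lexw {X : Type*} (t u : FreeMagma X) : Prop :=
  t.magmaLength < u.magmaLength ∨
    (t.magmaLength = u.magmaLength ∧ WellOrderingRel t u)

lemma lexw_irrefl {X : Type*} (t : FreeMagma X) : ¬ lexw t t := by
  rintro (h | ⟨-, h⟩)
  · omega
  · exact _root_.irrefl t h

lemma lexw_trans {X : Type*} {t u v : FreeMagma X}
    (h1 : lexw t u) (h2 : lexw u v) : lexw t v := by
  rcases h1 with h1 | ⟨h1, h1'⟩ <;> rcases h2 with h2 | ⟨h2, h2'⟩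
  · exact Or.inl (h1.trans h2)
  · exact Or.inl (h2 ▸ h1)
  · exact Or.inl (h1 ▸ h2)
  · exact Or.inr ⟨h1.trans h2, _root_.trans h1' h2'⟩

lemma lexw_trichotomous {X : Type*} (t u : FreeMagma X) :
    lexw t u ∨ t = u ∨ lexw u t := by
  rcases lt_trichotomy t.magmaLength u.magmaLength with h | h | h
  · exact Or.inl (Or.inl h)
  · rcases trichotomous (r := @WellOrderingRel (FreeMagma X)) t u with hw | hw | hw
    · exact Or.inl (Or.inr ⟨h, hw⟩)
    · exact Or.inr (Or.inl hw)
    · exact Or.inr (Or.inr (Or.inr ⟨h.symm, hw⟩))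
  · exact Or.inr (Or.inr (Or.inl h))

open Classical in
/-- the extended order. -/
noncomputable def rext {X : Type*} (A : Set (FreeMagma X))
    (r : FreeMagma X → FreeMagma X → Prop) (t u : FreeMagma X) : Prop :=
  (gA A t).elim ((gA A u).elim (lexw t u) fun _ => False)
    (fun a => (gA A u).elim True fun b => if a = b then lexw t u else r a b)

end HallExtAux

open HallExtAux in
/-- Extension of Hall orders: if `A` is a nonempty λ-stable subset of `FreeMagma X`
equipped with a (strict) total order `r` such that `λ(t) < t` for every non-leaf
`t ∈ A`, then there is a strict total order on all of `FreeMagma X` with the same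
property, extending `r` on `A`. -/
theorem exists_hall_order_extension {X : Type*} (A : Set (FreeMagma X))
    (hA : A.Nonempty)
    (hstable : ∀ t ∈ A, 1 < t.magmaLength → t.leftFactor ∈ A)
    (r : FreeMagma X → FreeMagma X → Prop)
    (hirr : ∀ a ∈ A, ¬ r a a)
    (htrans : ∀ a ∈ A, ∀ b ∈ A, ∀ c ∈ A, r a b → r b c → r a c)
    (htotal : ∀ a ∈ A, ∀ b ∈ A, a = b ∨ r a b ∨ r b a)
    (hhall : ∀ t ∈ A, 1 < t.magmaLength → r t.leftFactor t) :
    ∃ r' : FreeMagma X → FreeMagma X → Prop,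
      IsStrictTotalOrder (FreeMagma X) r' ∧
      (∀ t : FreeMagma X, 1 < t.magmaLength → r' t.leftFactor t) ∧
      (∀ a ∈ A, ∀ b ∈ A, (r a b ↔ r' a b)) := by
  classical
  refine ⟨rext A r, ?_, ?_, ?_⟩
  · refine { trichotomous := ?_, irrefl := ?_, trans := ?_ }
    · -- trichotomy
      intro t u
      rcases hgt : gA A t with _ | a <;> rcases hgu : gA A u with _ | b <;>
        simp only [rext, hgt, hgu, Option.elim]
      · rcases lexw_trichotomous t u with h | h | h
        · exact fun h1 _ => absurd h h1
        · exact fun _ _ => h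
        · exact fun _ h2 => absurd h h2
      · exact fun _ h2 => absurd trivial h2
      · exact fun h1 _ => absurd trivial h1
      · have ha := gA_mem t a hgt
        have hb := gA_mem u b hgu
        by_cases hab : a = b
        · subst hab
          rw [if_pos rfl, if_pos rfl]
          rcases lexw_trichotomous t u with h | h | h
          · exact fun h1 _ => absurd h h1
          · exact fun _ _ => h
          · exact fun _ h2 => absurd h h2
        · rw [if_neg hab, if_neg (Ne.symm hab)]
          rcases htotal a ha b hb with h | h | h
          · exact absurd h hab
          · exact fun h1 _ => absurd h h1
          · exact fun _ h2 => absurd h h2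
    · -- irreflexivity
      intro t h
      rcases hg : gA A t with _ | a <;>
        simp only [rext, hg, Option.elim] at h
      · exact lexw_irrefl t h
      · rw [if_pos trivial] at h
        exact lexw_irrefl t h
    · -- transitivity
      intro t u v h1 h2
      rcases hgt : gA A t with _ | a <;> rcases hgu : gA A u with _ | b <;>
        rcases hgv : gA A v with _ | c <;>
        simp only [rext, hgt, hgu, hgv, Option.elim] at h1 h2 ⊢
      · exact lexw_trans h1 h2
      · have ha := gA_mem t a hgt
        have hb := gA_mem u b hgu
        have hc := gA_mem v c hgv
        by_cases hab : a = b <;> by_cases hbc : b = c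
        · subst hab; subst hbc
          rw [if_pos rfl] at h1 h2 ⊢
          exact lexw_trans h1 h2
        · subst hab
          rw [if_pos rfl] at h1
          rw [if_neg hbc] at h2 ⊢
          exact h2
        · subst hbc
          rw [if_neg hab] at h1 ⊢
          exact h1
        · rw [if_neg hab] at h1
          rw [if_neg hbc] at h2
          by_cases hac : a = c
          · subst hac
            exact absurd (htrans a ha b hb a hc h1 h2) (hirr a ha)
          · rw [if_neg hac]
            exact htrans a ha b hb c hc h1 h2
  · -- Hall property
    intro t ht
    by_cases hmem : t ∈ A
    · have h1 := gA_mem_self hmem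
      have h2 := gA_mem_self (hstable t hmem ht)
      simp only [rext, h1, h2, Option.elim]
      have hne : t.leftFactor ≠ t := fun h =>
        absurd (congrArg FreeMagma.magmaLength h) (Nat.ne_of_lt (length_leftFactor_lt ht))
      rw [if_neg hne]
      exact hhall t hmem ht
    · have h1 := gA_not_mem hmem
      have hl : lexw t.leftFactor t := Or.inl (length_leftFactor_lt ht)
      rcases hg : gA A t with _ | a
      · have h2 : gA A t.leftFactor = none := h1 ▸ hg
        simp only [rext, hg, h2, Option.elim]
        exact hl
      · have h2 : gA A t.leftFactor = some a := h1 ▸ hg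
        simp only [rext, hg, h2, Option.elim]
        simpa using hl
  · -- extension
    intro a ha b hb
    have hga := gA_mem_self ha
    have hgb := gA_mem_self hb
    simp only [rext, hga, hgb, Option.elim]
    by_cases hab : a = b
    · subst hab
      rw [if_pos rfl]
      exact iff_of_false (hirr a ha) (lexw_irrefl a)
    · rw [if_neg hab]
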